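/- Let a, b be real numbers, n a natural number, and v a real number with |v| < 1; set γ = 1/√(1 − v²). If φ : ℝ² → ℝ is twice continuously differentiable and satisfies φ(φ_xx − φ_tt) − a(φ_x² − φ_t²) + bφ^(n+1) = 0 everywhere, then the Lorentz-transformed function ψ(x,t) = φ(γ(x − v t), γ(t − v x)) satisfies the same equation ψ(ψ_xx − ψ_tt) − a(ψ_x² − ψ_t²) + bψ^(n+1) = 0 everywhere. -/

import Mathlib

private lemma apply_pair {M : Type*} [NormedAddCommGroup M] [NormedSpace ℝ M]
    (T : ℝ × ℝ →L[ℝ] M) (α β : ℝ) :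
    T (α, β) = α • T (1, 0) + β • T (0, 1) := by
  have h : ((α, β) : ℝ × ℝ) = α • ((1, 0) : ℝ × ℝ) + β • ((0, 1) : ℝ × ℝ) := by
    simp [Prod.ext_iff]
  rw [h, map_add, map_smul, map_smul]

/-- the soliton PDE is Lorentz invariant. -/
theorem stmt_1 (a b v : ℝ) (n : ℕ) (hv : |v| < 1) (γ : ℝ)
    (hγ : γ = 1 / Real.sqrt (1 - v ^ 2))
    (φ : ℝ → ℝ → ℝ) (hφ : ContDiff ℝ 2 (fun p : ℝ × ℝ => φ p.1 p.2))
    (hpde : ∀ x t : ℝ,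
      φ x t *
        (deriv (fun x' => deriv (fun x'' => φ x'' t) x') x
          - deriv (fun t' => deriv (fun t'' => φ x t'') t') t)
      - a * ((deriv (fun x' => φ x' t) x) ^ 2 - (deriv (fun t' => φ x t') t) ^ 2)
      + b * (φ x t) ^ (n + 1) = 0) :
    ∀ x t : ℝ,
      φ (γ * (x - v * t)) (γ * (t - v * x)) *
        (deriv (fun x' => deriv
            (fun x'' => φ (γ * (x'' - v * t)) (γ * (t - v * x''))) x') x
          - deriv (fun t' => deriv
            (fun t'' => φ (γ * (x - v * t'')) (γ * (t'' - v * x))) t') t)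
      - a * ((deriv (fun x' => φ (γ * (x' - v * t)) (γ * (t - v * x'))) x) ^ 2
          - (deriv (fun t' => φ (γ * (x - v * t')) (γ * (t' - v * x))) t) ^ 2)
      + b * (φ (γ * (x - v * t)) (γ * (t - v * x))) ^ (n + 1) = 0 := by
  intro x t
  set F : ℝ × ℝ → ℝ := fun p => φ p.1 p.2 with hF
  have hγ2 : γ ^ 2 * (1 - v ^ 2) = 1 := by
    have hv2 : v ^ 2 < 1 := by
      have := abs_nonneg v
      nlinarith [sq_abs v]
    have h1 : (0:ℝ) < 1 - v ^ 2 := by linarith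
    have hs : Real.sqrt (1 - v ^ 2) ^ 2 = 1 - v ^ 2 := Real.sq_sqrt h1.le
    have hs0 : Real.sqrt (1 - v ^ 2) ≠ 0 := by positivity
    rw [hγ, div_pow, one_pow, hs]
    field_simp
  have hFd : Differentiable ℝ F := hφ.differentiable (by norm_num)
  have hF'd : Differentiable ℝ (fderiv ℝ F) :=
    (hφ.fderiv_right (m := 1) (by norm_num)).differentiable one_ne_zero
  -- derivative of F along a curve
  have hd1 : ∀ (c : ℝ → ℝ × ℝ) (u : ℝ × ℝ) (s : ℝ), HasDerivAt c u s →
      HasDerivAt (fun r => F (c r)) (fderiv ℝ F (c s) u) s :=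
    fun c u s hc => (hFd (c s)).hasFDerivAt.comp_hasDerivAt s hc
  have hd2 : ∀ (c : ℝ → ℝ × ℝ) (u w : ℝ × ℝ) (s : ℝ), HasDerivAt c u s →
      HasDerivAt (fun r => fderiv ℝ F (c r) w) (fderiv ℝ (fderiv ℝ F) (c s) u w) s := by
    intro c u w s hc
    have h : HasDerivAt (fun r => fderiv ℝ F (c r)) (fderiv ℝ (fderiv ℝ F) (c s) u) s :=
      (hF'd (c s)).hasFDerivAt.comp_hasDerivAt s hc
    exact (ContinuousLinearMap.apply ℝ ℝ w).hasFDerivAt.comp_hasDerivAt s h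
  -- curves
  have hcX : ∀ (t s : ℝ), HasDerivAt (fun r => ((γ * (r - v * t), γ * (t - v * r)) : ℝ × ℝ))
      (γ, -(γ * v)) s := by
    intro t s
    apply HasDerivAt.prodMk
    · simpa using ((hasDerivAt_id s).sub_const (v * t)).const_mul γ
    · have := (((hasDerivAt_id s).const_mul v).const_sub t).const_mul γ
      convert this using 1
      all_goals first | rfl | ring
  have hcT : ∀ (x s : ℝ), HasDerivAt (fun r => ((γ * (x - v * r), γ * (r - v * x)) : ℝ × ℝ))
      (-(γ * v), γ) s := by
    intro x s
    apply HasDerivAt.prodMk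
    · have := (((hasDerivAt_id s).const_mul v).const_sub x).const_mul γ
      convert this using 1
      all_goals first | rfl | ring
    · simpa using ((hasDerivAt_id s).sub_const (v * x)).const_mul γ
  have hcE1 : ∀ (y s : ℝ), HasDerivAt (fun r => ((r, s) : ℝ × ℝ)) (1, 0) y :=
    fun y s => (hasDerivAt_id y).prodMk (hasDerivAt_const y s)
  have hcE2 : ∀ (y s : ℝ), HasDerivAt (fun r => ((y, r) : ℝ × ℝ)) (0, 1) s :=
    fun y s => (hasDerivAt_const s y).prodMk (hasDerivAt_id s)
  -- rewrite hpde in terms of fderiv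
  have hpde' : ∀ p : ℝ × ℝ,
      F p * (fderiv ℝ (fderiv ℝ F) p (1, 0) (1, 0) - fderiv ℝ (fderiv ℝ F) p (0, 1) (0, 1))
      - a * ((fderiv ℝ F p (1, 0)) ^ 2 - (fderiv ℝ F p (0, 1)) ^ 2)
      + b * (F p) ^ (n + 1) = 0 := by
    rintro ⟨y, s⟩
    have h1 : deriv (fun x' => φ x' s) y = fderiv ℝ F (y, s) (1, 0) :=
      (hd1 _ _ y (hcE1 y s)).deriv
    have h2 : deriv (fun t' => φ y t') s = fderiv ℝ F (y, s) (0, 1) :=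
      (hd1 _ _ s (hcE2 y s)).deriv
    have h11 : deriv (fun x' => deriv (fun x'' => φ x'' s) x') y
        = fderiv ℝ (fderiv ℝ F) (y, s) (1, 0) (1, 0) := by
      have hfun : (fun x' => deriv (fun x'' => φ x'' s) x')
          = fun x' => fderiv ℝ F (x', s) (1, 0) :=
        funext fun x' => (hd1 _ _ x' (hcE1 x' s)).deriv
      rw [hfun]
      exact (hd2 _ _ _ y (hcE1 y s)).deriv
    have h22 : deriv (fun t' => deriv (fun t'' => φ y t'') t') s
        = fderiv ℝ (fderiv ℝ F) (y, s) (0, 1) (0, 1) := by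
      have hfun : (fun t' => deriv (fun t'' => φ y t'') t')
          = fun t' => fderiv ℝ F (y, t') (0, 1) :=
        funext fun t' => (hd1 _ _ t' (hcE2 y t')).deriv
      rw [hfun]
      exact (hd2 _ _ _ s (hcE2 y s)).deriv
    have := hpde y s
    rw [h1, h2, h11, h22] at this
    exact this
  -- now the transformed derivatives
  set p : ℝ × ℝ := (γ * (x - v * t), γ * (t - v * x)) with hp
  have hX : deriv (fun x' => φ (γ * (x' - v * t)) (γ * (t - v * x'))) x
      = fderiv ℝ F p (γ, -(γ * v)) := (hd1 _ _ x (hcX t x)).deriv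
  have hT : deriv (fun t' => φ (γ * (x - v * t')) (γ * (t' - v * x))) t
      = fderiv ℝ F p (-(γ * v), γ) := (hd1 _ _ t (hcT x t)).deriv
  have hXX : deriv (fun x' => deriv
      (fun x'' => φ (γ * (x'' - v * t)) (γ * (t - v * x''))) x') x
      = fderiv ℝ (fderiv ℝ F) p (γ, -(γ * v)) (γ, -(γ * v)) := by
    have hfun : (fun x' => deriv (fun x'' => φ (γ * (x'' - v * t)) (γ * (t - v * x''))) x')
        = fun x' => fderiv ℝ F (γ * (x' - v * t), γ * (t - v * x')) (γ, -(γ * v)) :=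
      funext fun x' => (hd1 _ _ x' (hcX t x')).deriv
    rw [hfun]
    exact (hd2 _ _ _ x (hcX t x)).deriv
  have hTT : deriv (fun t' => deriv
      (fun t'' => φ (γ * (x - v * t'')) (γ * (t'' - v * x))) t') t
      = fderiv ℝ (fderiv ℝ F) p (-(γ * v), γ) (-(γ * v), γ) := by
    have hfun : (fun t' => deriv (fun t'' => φ (γ * (x - v * t'')) (γ * (t'' - v * x))) t')
        = fun t' => fderiv ℝ F (γ * (x - v * t'), γ * (t' - v * x)) (-(γ * v), γ) :=
      funext fun t' => (hd1 _ _ t' (hcT x t')).deriv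
    rw [hfun]
    exact (hd2 _ _ _ t (hcT x t)).deriv
  have hφp : φ (γ * (x - v * t)) (γ * (t - v * x)) = F p := rfl
  rw [hX, hT, hXX, hTT, hφp]
  -- expand bilinearity
  set A : ℝ × ℝ →L[ℝ] ℝ := fderiv ℝ F p with hA
  set B2 : ℝ × ℝ →L[ℝ] (ℝ × ℝ →L[ℝ] ℝ) := fderiv ℝ (fderiv ℝ F) p with hB2
  have hAu : A (γ, -(γ * v)) = γ * A (1, 0) + (-(γ * v)) * A (0, 1) := by
    rw [apply_pair A γ (-(γ * v))]; simp [smul_eq_mul]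
  have hAw : A (-(γ * v), γ) = (-(γ * v)) * A (1, 0) + γ * A (0, 1) := by
    rw [apply_pair A (-(γ * v)) γ]; simp [smul_eq_mul]
  have hBuu : B2 (γ, -(γ * v)) (γ, -(γ * v))
      = γ * (γ * B2 (1, 0) (1, 0) + (-(γ * v)) * B2 (1, 0) (0, 1))
        + (-(γ * v)) * (γ * B2 (0, 1) (1, 0) + (-(γ * v)) * B2 (0, 1) (0, 1)) := by
    rw [apply_pair B2 γ (-(γ * v))]
    simp only [ContinuousLinearMap.add_apply, ContinuousLinearMap.smul_apply, smul_eq_mul]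
    rw [apply_pair (B2 (1, 0)) γ (-(γ * v)), apply_pair (B2 (0, 1)) γ (-(γ * v))]
    simp [smul_eq_mul]
  have hBww : B2 (-(γ * v), γ) (-(γ * v), γ)
      = (-(γ * v)) * ((-(γ * v)) * B2 (1, 0) (1, 0) + γ * B2 (1, 0) (0, 1))
        + γ * ((-(γ * v)) * B2 (0, 1) (1, 0) + γ * B2 (0, 1) (0, 1)) := by
    rw [apply_pair B2 (-(γ * v)) γ]
    simp only [ContinuousLinearMap.add_apply, ContinuousLinearMap.smul_apply, smul_eq_mul]
    rw [apply_pair (B2 (1, 0)) (-(γ * v)) γ, apply_pair (B2 (0, 1)) (-(γ * v)) γ]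
    simp [smul_eq_mul]
  rw [hAu, hAw, hBuu, hBww]
  have hp' := hpde' p
  rw [← hA, ← hB2] at hp'
  linear_combination hp' + (F p * (B2 (1, 0) (1, 0) - B2 (0, 1) (0, 1))
    - a * ((A (1, 0)) ^ 2 - (A (0, 1)) ^ 2)) * hγ2
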